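/- Semantic correctness of Algorithm 6 (conjunction of reachability and safety tasks under a safety environment specification): let T₁ be a set of nonempty finite words over A × B, let M₂ and M₃ be DFAs over A × B with finite state types and accepting sets F₂ and F₃, let T₂ and T₃ be the sets of nonempty finite words accepted by M₂ and M₃ respectively, and define EnvWinsFrom₃(q) to hold iff there exists an environment strategy σenv such that for every agent strategy σag and every k ≥ 1, M₃.evalFrom q (play(σag, σenv)_{<k}) ∈ F₃. For a play π write run₂(k) = M₂.eval(π_{<k}) and run₃(k) = M₃.eval(π_{<k}), and say Bad(π, k) holds iff ¬EnvWinsFrom₃(run₃(k)) or (k ≥ 1 and run₃(k) ∉ F₃). For states q₂ of M₂ and q₃ of M₃, define AgentSafeUnder(q₂, q₃) to hold iff there exists an agent strategy σag such that for every σenv, writing π = play(σag, σenv), for every m ≥ 1: M₂.evalFrom q₂ (π_{<m}) ∈ F₂, or there exists k ≤ m with ¬EnvWinsFrom₃(M₃.evalFrom q₃ (π_{<k})) or (k ≥ 1 and M₃.evalFrom q₃ (π_{<k}) ∉ F₃). Then the following are equivalent: (i) there exists an agent strategy enforcing Reach T₁ ∩ Safe T₂ under the environment specification Safe T₃; (ii)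 there exists an agent strategy σag such that for every σenv, writing π = play(σag, σenv), there exists m ≥ 0 with: either Bad(π, k) for some k ≤ m, or (m ≥ 1, π_{<m} ∈ T₁, π_{<j} ∈ T₂ for all 1 ≤ j ≤ m, and AgentSafeUnder(run₂(m), run₃(m))). -/
import Mathlib



/-- The first `k` letters of an infinite trace. -/
def pre {α : Type} (π : ℕ → α) (k : ℕ) : List α := (List.range k).map π

/-- The finite history of pairs of moves after `k` rounds. -/
def playPrefix {A B : Type} (σag : List B → A) (σenv : List A → B) : ℕ → List (A × B)
  | 0 => []
  | k + 1 =>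
      let h := playPrefix σag σenv k
      let a := σag (h.map Prod.snd)
      let b := σenv (h.map Prod.fst ++ [a])
      h ++ [(a, b)]

/-- The infinite play generated by an agent strategy `σag : List B → A`
(the agent moves first) and an environment strategy `σenv : List A → B`:
`a₀ = σag []`, `b₀ = σenv [a₀]`, `a_{i+1} = σag [b₀, …, b_i]`,
`b_{i+1} = σenv [a₀, …, a_{i+1}]`, and `play σag σenv i = (a_i, b_i)`. -/
def play {A B : Type} (σag : List B → A) (σenv : List A → B) (i : ℕ) : A × B :=
  let h := playPrefix σag σenv i
  let a := σag (h.map Prod.snd)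
  let b := σenv (h.map Prod.fst ++ [a])
  (a, b)

/-- Reachability property: some nonempty finite prefix is in `T`. -/
def Reach {A B : Type} (T : Set (List (A × B))) : Set (ℕ → A × B) :=
  {π | ∃ k, 1 ≤ k ∧ pre π k ∈ T}

/-- Safety property: every nonempty finite prefix is in `T`. -/
def Safe {A B : Type} (T : Set (List (A × B))) : Set (ℕ → A × B) :=
  {π | ∀ k, 1 ≤ k → pre π k ∈ T}

/-- The agent strategy `σag` enforces the property `P`. -/
def AgentEnforces {A B : Type} (σag : List B → A) (P : Set (ℕ → A × B)) : Prop :=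
  ∀ σenv : List A → B, play σag σenv ∈ P

/-- The environment strategy `σenv` enforces the property `P`. -/
def EnvEnforces {A B : Type} (σenv : List A → B) (P : Set (ℕ → A × B)) : Prop :=
  ∀ σag : List B → A, play σag σenv ∈ P

/-- The agent strategy `σag` enforces `Task` under the environment
specification `Env`. -/
def EnforcesUnder {A B : Type} (σag : List B → A) (Task Env : Set (ℕ → A × B)) : Prop :=
  ∀ σenv : List A → B, EnvEnforces σenv Env → play σag σenv ∈ Task

/-- `EnvWinsSafeFrom M q` : the environment has a strategy ensuring that,
starting the run of `M` from state `q`, every state reached after `k ≥ 1`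
letters of the play lies in `M.accept`. -/
def EnvWinsSafeFrom {A B Q : Type} (M : DFA (A × B) Q) (q : Q) : Prop :=
  ∃ σenv : List A → B, ∀ σag : List B → A, ∀ k, 1 ≤ k →
    M.evalFrom q (pre (play σag σenv) k) ∈ M.accept

/-- `BadAt M₃ π k` : at time `k` the run of `M₃` on the play `π` witnesses a
violation of the environment's safety specification: either the reached state
is not in the environment's safety winning region, or `k ≥ 1` and the reached
state is not accepting. -/
def BadAt {A B Q₃ : Type} (M₃ : DFA (A × B) Q₃) (π : ℕ → A × B) (k : ℕ) : Prop :=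
  ¬ EnvWinsSafeFrom M₃ (M₃.eval (pre π k)) ∨
    (1 ≤ k ∧ M₃.eval (pre π k) ∉ M₃.accept)

/-- `AgentSafeUnder M₂ M₃ q₂ q₃` : the agent has a strategy such that against
every environment strategy, at every time `m ≥ 1`, either the run of `M₂` from
`q₂` is accepting, or by time `m` the run of `M₃` from `q₃` has left the
environment's safety winning region or left `M₃.accept` (at a time `k ≥ 1`). -/
def AgentSafeUnder {A B Q₂ Q₃ : Type} (M₂ : DFA (A × B) Q₂) (M₃ : DFA (A × B) Q₃)
    (q₂ : Q₂) (q₃ : Q₃) : Prop :=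
  ∃ σag : List B → A, ∀ σenv : List A → B, ∀ m : ℕ, 1 ≤ m →
    M₂.evalFrom q₂ (pre (play σag σenv) m) ∈ M₂.accept ∨
    ∃ k : ℕ, k ≤ m ∧
      (¬ EnvWinsSafeFrom M₃ (M₃.evalFrom q₃ (pre (play σag σenv) k)) ∨
        (1 ≤ k ∧ M₃.evalFrom q₃ (pre (play σag σenv) k) ∉ M₃.accept))

namespace Alg6

variable {A B : Type}

theorem playPrefix_succ (σa : List B → A) (σe : List A → B) (k : ℕ) :
    playPrefix σa σe (k + 1) = playPrefix σa σe k ++ [play σa σe k] := rfl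

@[simp] theorem playPrefix_length (σa : List B → A) (σe : List A → B) (k : ℕ) :
    (playPrefix σa σe k).length = k := by
  induction k with
  | zero => rfl
  | succ n ih => rw [playPrefix_succ]; simp [ih]

theorem pre_play (σa : List B → A) (σe : List A → B) (k : ℕ) :
    pre (play σa σe) k = playPrefix σa σe k := by
  induction k with
  | zero => rfl
  | succ n ih =>
    rw [playPrefix_succ, ← ih]
    simp [pre, List.range_succ]

def shiftAg (σa : List B → A) (hB : List B) : List B → A := fun l => σa (hB ++ l)
def shiftEnv (σe : List A → B) (hA : List A) : List A → B := fun l => σe (hA ++ l)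

theorem playPrefix_add (σa : List B → A) (σe : List A → B) (m k : ℕ) :
    playPrefix σa σe (m + k) =
      playPrefix σa σe m ++
        playPrefix (shiftAg σa ((playPrefix σa σe m).map Prod.snd))
          (shiftEnv σe ((playPrefix σa σe m).map Prod.fst)) k := by
  induction k with
  | zero => simp [playPrefix]
  | succ n ih =>
    have : m + (n + 1) = (m + n) + 1 := rfl
    rw [this, playPrefix_succ, playPrefix_succ, ih, ← List.append_assoc]
    congr 2
    show play σa σe (m + n) = _
    simp only [play, ih, shiftAg, shiftEnv, List.map_append, List.append_assoc]

theorem playPrefix_take (σa : List B → A) (σe : List A → B) {k n : ℕ} (h : k ≤ n) :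
    (playPrefix σa σe n).take k = playPrefix σa σe k := by
  obtain ⟨d, rfl⟩ := Nat.exists_eq_add_of_le h
  rw [playPrefix_add]
  exact List.take_left' (playPrefix_length _ _ _)

theorem playPrefix_congr {σa σa' : List B → A} {σe σe' : List A → B} (n : ℕ)
    (ha : ∀ k < n, σa ((playPrefix σa σe k).map Prod.snd)
        = σa' ((playPrefix σa σe k).map Prod.snd))
    (he : ∀ k < n,
        σe ((playPrefix σa σe k).map Prod.fst ++ [σa ((playPrefix σa σe k).map Prod.snd)])
      = σe' ((playPrefix σa σe k).map Prod.fst ++ [σa ((playPrefix σa σe k).map Prod.snd)])) :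
    playPrefix σa σe n = playPrefix σa' σe' n := by
  induction n with
  | zero => rfl
  | succ n ih =>
    have h1 := ih (fun k hk => ha k (by omega)) (fun k hk => he k (by omega))
    rw [playPrefix_succ, playPrefix_succ, ← h1]
    congr 1
    show [play σa σe n] = [play σa' σe' n]
    simp only [play, ← h1]
    rw [← ha n (by omega), ← he n (by omega)]

theorem play_ext {σa σa' : List B → A} {σe σe' : List A → B}
    (h : ∀ k, playPrefix σa σe k = playPrefix σa' σe' k) :
    play σa σe = play σa' σe' := by
  funext i
  have h1 := h (i + 1)
  rw [playPrefix_succ, playPrefix_succ, h i] at h1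
  simpa using List.append_cancel_left h1

theorem playPrefix_det {σa : List B → A} {σe σe' : List A → B} (n : ℕ)
    (h : (playPrefix σa σe n).map Prod.snd = (playPrefix σa σe' n).map Prod.snd) :
    playPrefix σa σe n = playPrefix σa σe' n := by
  induction n with
  | zero => rfl
  | succ n ih =>
    rw [playPrefix_succ, playPrefix_succ] at h ⊢
    rw [List.map_append, List.map_append] at h
    obtain ⟨h1, h2⟩ := List.append_inj' h (by simp)
    have h3 := ih h1
    rw [h3]
    congr 1
    simp only [play, ← h3]
    simp only [List.map_cons, List.map_nil] at h2
    have hb : (play σa σe n).2 = (play σa σe' n).2 := by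
      simpa using h2
    simp only [play, ← h3] at hb
    rw [← hb]

theorem playPrefix_fst_eq (σa : List B → A) (σe : List A → B) (n : ℕ) :
    (playPrefix σa σe n).map Prod.fst = (List.range n).map (fun i => (play σa σe i).1) := by
  rw [← pre_play]
  simp [pre, List.map_map, Function.comp_def]

theorem playPrefix_fst_getD (σa : List B → A) (σe : List A → B) {n i : ℕ} (h : i < n) (d : A) :
    ((playPrefix σa σe n).map Prod.fst).getD i d = (play σa σe i).1 := by
  rw [playPrefix_fst_eq]
  rw [List.getD_eq_getElem _ _ (by simpa using h)]
  simp

theorem envQuery_eq (σa : List B → A) (σe : List A → B) (k : ℕ) :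
    (playPrefix σa σe k).map Prod.fst ++ [σa ((playPrefix σa σe k).map Prod.snd)]
      = (playPrefix σa σe (k + 1)).map Prod.fst := by
  rw [playPrefix_succ, List.map_append]
  rfl

theorem envQuery_getD (σa : List B → A) (σe : List A → B) (k : ℕ) (d : A) :
    (((playPrefix σa σe k).map Prod.fst ++ [σa ((playPrefix σa σe k).map Prod.snd)]).getD 0 d)
      = σa [] := by
  rw [envQuery_eq, playPrefix_fst_getD σa σe (by omega) d]
  show σa ((playPrefix σa σe 0).map Prod.snd) = σa []
  rfl

theorem playPrefix_congr_env {σa : List B → A} {σe σe' : List A → B} (n : ℕ)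
    (he : ∀ l : List A, l ≠ [] → σe l = σe' l) :
    playPrefix σa σe n = playPrefix σa σe' n := by
  apply playPrefix_congr n (fun k _ => rfl)
  intro k _
  exact he _ (by simp)

def spliceEnv (σe : List A → B) (m : ℕ) (τ : List A → B) : List A → B :=
  fun l => if l.length ≤ m then σe l else τ (l.drop m)

def spliceAg (σa : List B → A) (m : ℕ) (τ : List B → A) : List B → A :=
  fun l => if l.length < m then σa l else τ (l.drop m)

theorem spliceEnv_prefix (σa : List B → A) (σe : List A → B) (τ : List A → B) {m k : ℕ}
    (h : k ≤ m) : playPrefix σa (spliceEnv σe m τ) k = playPrefix σa σe k := by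
  refine (playPrefix_congr k (fun _ _ => rfl) ?_).symm
  intro j hj
  have : ((playPrefix σa σe j).map Prod.fst ++
      [σa ((playPrefix σa σe j).map Prod.snd)]).length = j + 1 := by simp
  simp only [spliceEnv, this]
  rw [if_pos (by omega)]

theorem spliceEnv_play (σa : List B → A) (σe : List A → B) (τ : List A → B) (m k : ℕ) :
    playPrefix σa (spliceEnv σe m τ) (m + k) =
      playPrefix σa σe m ++
        playPrefix (shiftAg σa ((playPrefix σa σe m).map Prod.snd)) τ k := by
  rw [playPrefix_add, spliceEnv_prefix σa σe τ (le_refl m)]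
  congr 1
  apply (playPrefix_congr_env k ?_).symm
  intro l hl
  have hlen : (((playPrefix σa σe m).map Prod.fst) ++ l).length = m + l.length := by simp
  simp only [shiftEnv, spliceEnv, hlen]
  rw [if_neg (by have := List.length_pos_iff.mpr hl; omega)]
  rw [List.drop_left' (by simp)]

theorem spliceAg_prefix (σa : List B → A) (σe : List A → B) (τ : List B → A) {m k : ℕ}
    (h : k ≤ m) : playPrefix (spliceAg σa m τ) σe k = playPrefix σa σe k := by
  refine (playPrefix_congr k ?_ (fun _ _ => rfl)).symm
  intro j hj
  simp only [spliceAg]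
  rw [if_pos (by simp; omega)]

theorem spliceAg_play (σa : List B → A) (σe : List A → B) (τ : List B → A) (m k : ℕ) :
    playPrefix (spliceAg σa m τ) σe (m + k) =
      playPrefix σa σe m ++
        playPrefix τ (shiftEnv σe ((playPrefix σa σe m).map Prod.fst)) k := by
  rw [playPrefix_add, spliceAg_prefix σa σe τ (le_refl m)]
  congr 1
  have : shiftAg (spliceAg σa m τ) ((playPrefix σa σe m).map Prod.snd) = τ := by
    funext l
    simp only [shiftAg, spliceAg]
    rw [if_neg (by simp), List.drop_left' (by simp)]
  rw [this]

/-- Residual winning states: every state reached along a play against a winning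
environment strategy is again winning. -/
theorem envWins_residual {Q : Type} (M : DFA (A × B) Q) (q : Q) (σe : List A → B)
    (h : ∀ σa : List B → A, ∀ k, 1 ≤ k → M.evalFrom q (pre (play σa σe) k) ∈ M.accept)
    (σa : List B → A) (m : ℕ) :
    EnvWinsSafeFrom M (M.evalFrom q (pre (play σa σe) m)) := by
  refine ⟨shiftEnv σe ((playPrefix σa σe m).map Prod.fst), fun τ k hk => ?_⟩
  have h4 := h (spliceAg σa m τ) (m + k) (by omega)
  rw [pre_play, spliceAg_play, DFA.evalFrom_of_append] at h4
  rw [pre_play, pre_play]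
  exact h4


theorem exists_safe_env [Nonempty A] [Nonempty B] {Q : Type} (M : DFA (A × B) Q)
    (σa : List B → A) (σe : List A → B)
    (hw : ∀ k, EnvWinsSafeFrom M (M.eval (pre (play σa σe) k)))
    (hs : ∀ k, 1 ≤ k → M.eval (pre (play σa σe) k) ∈ M.accept) :
    ∃ σe' : List A → B, (∀ k, playPrefix σa σe' k = playPrefix σa σe k) ∧
      ∀ σa' : List B → A, ∀ k, 1 ≤ k → M.eval (pre (play σa' σe') k) ∈ M.accept := by
  classical
  set d₀ : A := Classical.arbitrary A with hd₀
  set aM : ℕ → A := fun i => (play σa σe i).1 with haM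
  set wst : Q → List A → B := fun q =>
    if h : EnvWinsSafeFrom M q then Classical.choose h else fun _ => Classical.arbitrary B
    with hwstdef
  have wst_spec : ∀ q, EnvWinsSafeFrom M q → ∀ τ k, 1 ≤ k →
      M.evalFrom q (pre (play τ (wst q)) k) ∈ M.accept := by
    intro q hq τ k hk
    rw [hwstdef]; simp only [dif_pos hq]
    exact Classical.choose_spec hq τ k hk
  set P : List A → ℕ → Prop := fun l j => j < l.length ∧ l.getD j d₀ ≠ aM j with hP
  set σe' : List A → B := fun l =>
    if hc : ∃ j, P l j then
      wst (M.eval (pre (play σa σe) (Nat.find hc))) (l.drop (Nat.find hc))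
    else σe ((List.range l.length).map aM) with hσe'
  have hfst : ∀ n, (playPrefix σa σe n).map Prod.fst = (List.range n).map aM := fun n =>
    playPrefix_fst_eq σa σe n
  -- consistent lists get the canonical response
  have hcons : ∀ n, σe' ((playPrefix σa σe n).map Prod.fst)
      = σe ((playPrefix σa σe n).map Prod.fst) := by
    intro n
    have hnc : ¬ ∃ j, P ((playPrefix σa σe n).map Prod.fst) j := by
      rintro ⟨j, hj1, hj2⟩
      simp only [List.length_map, playPrefix_length] at hj1
      exact hj2 (playPrefix_fst_getD σa σe hj1 d₀)
    rw [hσe']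
    simp only [dif_neg hnc]
    rw [hfst n]
    simp
  have claim1 : ∀ k, playPrefix σa σe' k = playPrefix σa σe k := by
    intro k
    refine (playPrefix_congr k (fun _ _ => rfl) ?_).symm
    intro j hj
    rw [envQuery_eq]
    exact (hcons (j + 1)).symm
  refine ⟨σe', claim1, ?_⟩
  -- agreement lemma while the agent follows the canonical moves
  have agree : ∀ (σa' : List B → A) (n : ℕ),
      (∀ j < n, (play σa' σe' j).1 = aM j) → playPrefix σa' σe' n = playPrefix σa σe n := by
    intro σa' n
    induction n with
    | zero => intro _; rfl
    | succ n ih =>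
      intro hyp
      have hpre := ih (fun j hj => hyp j (by omega))
      rw [playPrefix_succ, playPrefix_succ, hpre]
      congr 1
      have hfsteq : (play σa' σe' n).1 = (play σa σe n).1 := hyp n (by omega)
      have hq : (playPrefix σa' σe' n).map Prod.fst ++ [σa' ((playPrefix σa' σe' n).map Prod.snd)]
          = (playPrefix σa σe (n+1)).map Prod.fst := by
        rw [envQuery_eq σa' σe' n, playPrefix_succ, playPrefix_succ, hpre,
          List.map_append, List.map_append]
        simp [hfsteq]
      have hsnd : (play σa' σe' n).2 = (play σa σe n).2 := by
        show σe' ((playPrefix σa' σe' n).map Prod.fst ++ [σa' ((playPrefix σa' σe' n).map Prod.snd)])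
          = (play σa σe n).2
        rw [hq, hcons (n+1)]
        rw [← envQuery_eq σa σe n]
        rfl
      rw [show play σa' σe' n = play σa σe n from Prod.ext hfsteq hsnd]
  intro σa' k hk
  by_cases hdev : ∃ j, j < k ∧ (play σa' σe' j).1 ≠ aM j
  · set j₀ := Nat.find hdev with hj₀def
    obtain ⟨hj₀k, hne⟩ := Nat.find_spec hdev
    have hmin : ∀ j < j₀, (play σa' σe' j).1 = aM j := by
      intro j hj
      have := Nat.find_min hdev hj
      push_neg at this
      exact this (by omega)
    have hpre : playPrefix σa' σe' j₀ = playPrefix σa σe j₀ := agree σa' j₀ hmin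
    set hA₀ := (playPrefix σa σe j₀).map Prod.fst with hhA₀
    set hB₀ := (playPrefix σa σe j₀).map Prod.snd with hhB₀
    set q₀ := M.eval (pre (play σa σe) j₀) with hq₀
    set μ' := shiftAg σa' hB₀ with hμ'
    have hAlen : hA₀.length = j₀ := by simp [hhA₀]
    have hdevmove : σa' hB₀ ≠ aM j₀ := by
      have : (play σa' σe' j₀).1 = σa' ((playPrefix σa' σe' j₀).map Prod.snd) := rfl
      rw [this, hpre] at hne
      exact hne
    -- the shifted environment behaves like the winning strategy from q₀
    have hshift : ∀ k', playPrefix μ' (shiftEnv σe' hA₀) k' = playPrefix μ' (wst q₀) k' := by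
      intro k'
      refine playPrefix_congr k' (fun _ _ => rfl) ?_
      intro j hj
      set Lq := (playPrefix μ' (shiftEnv σe' hA₀) j).map Prod.fst ++
        [μ' ((playPrefix μ' (shiftEnv σe' hA₀) j).map Prod.snd)] with hLq
      have hLqlen : Lq.length = j + 1 := by simp [hLq]
      have hLqhead : Lq.getD 0 d₀ = σa' hB₀ := by
        rw [hLq, envQuery_getD]
        simp [hμ', shiftAg]
      show σe' (hA₀ ++ Lq) = wst q₀ Lq
      have hgetj₀ : (hA₀ ++ Lq).getD j₀ d₀ = σa' hB₀ := by
        rw [List.getD_append_right _ _ _ _ (by omega), hAlen]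
        simpa using hLqhead
      have hcP : ∃ i, P (hA₀ ++ Lq) i := by
        refine ⟨j₀, ?_, ?_⟩
        · simp only [List.length_append, hAlen, hLqlen]; omega
        · rw [hgetj₀]; exact hdevmove
      have hfind : Nat.find hcP = j₀ := by
        rw [Nat.find_eq_iff]
        refine ⟨⟨by simp only [List.length_append, hAlen, hLqlen]; omega,
          by rw [hgetj₀]; exact hdevmove⟩, ?_⟩
        intro i hi ⟨_, hiP⟩
        apply hiP
        rw [List.getD_append _ _ _ _ (by omega)]
        exact playPrefix_fst_getD σa σe (by omega) d₀
      rw [hσe']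
      simp only [dif_pos hcP]
      rw [hfind, List.drop_left' hAlen]
    have keyk : ∀ k', playPrefix σa' σe' (j₀ + k')
        = playPrefix σa σe j₀ ++ playPrefix μ' (wst q₀) k' := by
      intro k'
      rw [playPrefix_add, hpre, ← hshift]
    have hksplit : k = j₀ + (k - j₀) := by omega
    rw [pre_play, hksplit, keyk]
    have : M.eval (playPrefix σa σe j₀ ++ playPrefix μ' (wst q₀) (k - j₀))
        = M.evalFrom q₀ (playPrefix μ' (wst q₀) (k - j₀)) := by
      rw [hq₀, pre_play]
      exact M.evalFrom_of_append M.start _ _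
    rw [this]
    have := wst_spec q₀ (hw j₀) μ' (k - j₀) (by omega)
    rwa [pre_play] at this
  · push_neg at hdev
    rw [pre_play, agree σa' k hdev, ← pre_play]
    exact hs k hk


def fakeEnv (b₀ : B) (l : List B) : List A → B := fun q => l.getD (q.length - 1) b₀

theorem fakeEnv_spec (σa : List B → A) (b₀ : B) (l : List B) :
    ∀ m, m ≤ l.length → (playPrefix σa (fakeEnv b₀ l) m).map Prod.snd = l.take m := by
  intro m
  induction m with
  | zero => simp [playPrefix]
  | succ n ih =>
    intro hm
    rw [playPrefix_succ, List.map_append, ih (by omega)]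
    have hb : (play σa (fakeEnv b₀ l) n).2 = l.getD n b₀ := by
      show fakeEnv b₀ l ((playPrefix σa (fakeEnv b₀ l) n).map Prod.fst ++
        [σa ((playPrefix σa (fakeEnv b₀ l) n).map Prod.snd)]) = l.getD n b₀
      simp [fakeEnv]
    have hget : l[n]? = some (l.getD n b₀) := by
      rw [List.getD_eq_getElem _ _ (by omega)]
      exact List.getElem?_eq_getElem (by omega)
    rw [List.take_succ, hget]
    simp [hb]

theorem eval_append {α σ : Type*} (M : DFA α σ) (x y : List α) :
    M.eval (x ++ y) = M.evalFrom (M.eval x) y :=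
  M.evalFrom_of_append M.start x y


end Alg6

open Alg6 in
/-- Semantic correctness of Algorithm 6 (conjunction of reachability and
safety tasks under a safety environment specification): the agent can enforce
`Reach T₁ ∩ Safe T₂` under `Safe T₃` iff it has a strategy such that against
every environment strategy there is a time `m` at which either the environment
specification has already been violated, or (`m ≥ 1`, the prefix of the play is
in `T₁`, all prefixes up to time `m` are in `T₂`, and from the pair of states
reached in `M₂` and `M₃` the agent can stay safe for `T₂` under `Safe T₃`). -/

theorem alg6_correctness {A B Q₂ Q₃ : Type}
    [Fintype A] [Fintype B] [Nonempty A] [Nonempty B] [Fintype Q₂] [Fintype Q₃]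
    (T₁ : Set (List (A × B)))
    (M₂ : DFA (A × B) Q₂) (M₃ : DFA (A × B) Q₃)
    (T₂ : Set (List (A × B))) (hT₂ : T₂ = {w | w ≠ [] ∧ w ∈ M₂.accepts})
    (T₃ : Set (List (A × B))) (hT₃ : T₃ = {w | w ≠ [] ∧ w ∈ M₃.accepts}) :
    (∃ σag : List B → A, EnforcesUnder σag (Reach T₁ ∩ Safe T₂) (Safe T₃)) ↔
      (∃ σag : List B → A, ∀ σenv : List A → B, ∃ m : ℕ,
        (∃ k : ℕ, k ≤ m ∧ BadAt M₃ (play σag σenv) k) ∨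
        (1 ≤ m ∧ pre (play σag σenv) m ∈ T₁ ∧
          (∀ j, 1 ≤ j → j ≤ m → pre (play σag σenv) j ∈ T₂) ∧
          AgentSafeUnder M₂ M₃ (M₂.eval (pre (play σag σenv) m))
            (M₃.eval (pre (play σag σenv) m)))) := by
  classical
  constructor
  · rintro ⟨σag, hσ⟩
    refine ⟨σag, fun σenv => ?_⟩
    by_cases hbad : ∃ k, BadAt M₃ (play σag σenv) k
    · obtain ⟨k, hk⟩ := hbad
      exact ⟨k, Or.inl ⟨k, le_refl k, hk⟩⟩
    push_neg at hbad
    have hnb : ∀ k, EnvWinsSafeFrom M₃ (M₃.eval (pre (play σag σenv) k)) ∧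
        (1 ≤ k → M₃.eval (pre (play σag σenv) k) ∈ M₃.accept) := by
      intro k
      have h := hbad k
      rw [BadAt] at h
      push_neg at h
      exact h
    obtain ⟨σe', hpp, hsafe⟩ := Alg6.exists_safe_env M₃ σag σenv (fun k => (hnb k).1)
      (fun k hk => (hnb k).2 hk)
    have henv : EnvEnforces σe' (Safe T₃) := by
      intro σa' k hk
      rw [hT₃]
      refine ⟨?_, (DFA.mem_accepts _).mpr (hsafe σa' k hk)⟩
      intro hnil
      have := congrArg List.length hnil
      simp [pre] at this
      omega
    have hplayed : play σag σe' = play σag σenv := Alg6.play_ext hpp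
    have hmem := hσ σe' henv
    rw [hplayed] at hmem
    obtain ⟨⟨m₀, hm₀1, hm₀T₁⟩, hST₂⟩ := hmem
    refine ⟨m₀, Or.inr ⟨hm₀1, hm₀T₁, fun j hj _ => hST₂ j hj, ?_⟩⟩
    refine ⟨Alg6.shiftAg σag ((playPrefix σag σenv m₀).map Prod.snd), ?_⟩
    set σag' := Alg6.shiftAg σag ((playPrefix σag σenv m₀).map Prod.snd) with hσag'
    intro τ m' hm'
    by_cases hGood : ∃ k, k ≤ m' ∧
        (¬ EnvWinsSafeFrom M₃ (M₃.evalFrom (M₃.eval (pre (play σag σenv) m₀))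
            (pre (play σag' τ) k)) ∨
          (1 ≤ k ∧ M₃.evalFrom (M₃.eval (pre (play σag σenv) m₀))
            (pre (play σag' τ) k) ∉ M₃.accept))
    · exact Or.inr hGood
    left
    push_neg at hGood
    set σc := Alg6.spliceEnv σenv m₀ τ with hσc
    have hc1 : ∀ k, playPrefix σag σc (m₀ + k)
        = playPrefix σag σenv m₀ ++ playPrefix σag' τ k := by
      intro k
      rw [hσc, Alg6.spliceEnv_play]
    have hcpre : ∀ k ≤ m₀, playPrefix σag σc k = playPrefix σag σenv k :=
      fun k hk => Alg6.spliceEnv_prefix σag σenv τ hk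
    have hwin : EnvWinsSafeFrom M₃ (M₃.evalFrom (M₃.eval (pre (play σag σenv) m₀))
        (pre (play σag' τ) m')) := (hGood m' (le_refl m')).1
    set τs := Classical.choose hwin with hτs
    have hτspec := Classical.choose_spec hwin
    set σd := Alg6.spliceEnv σc (m₀ + m') τs with hσd
    have hd1 : ∀ k ≤ m₀ + m', playPrefix σag σd k = playPrefix σag σc k :=
      fun k hk => Alg6.spliceEnv_prefix σag σc τs hk
    set σag₂ := Alg6.shiftAg σag ((playPrefix σag σc (m₀ + m')).map Prod.snd) with hσag₂
    have hd2 : ∀ k, playPrefix σag σd ((m₀ + m') + k)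
        = playPrefix σag σc (m₀ + m') ++ playPrefix σag₂ τs k := by
      intro k
      rw [hσd, Alg6.spliceEnv_play]
    have hDpre : ∀ k ≤ m₀, playPrefix σag σd k = playPrefix σag σenv k := by
      intro k hk
      rw [hd1 k (by omega), hcpre k hk]
    have hDmid : ∀ k' ≤ m', playPrefix σag σd (m₀ + k')
        = playPrefix σag σenv m₀ ++ playPrefix σag' τ k' := by
      intro k' hk'
      rw [hd1 (m₀ + k') (by omega), hc1 k']
    have hqS : M₃.eval (playPrefix σag σc (m₀ + m'))
        = M₃.evalFrom (M₃.eval (pre (play σag σenv) m₀)) (pre (play σag' τ) m') := by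
      rw [hc1 m', Alg6.eval_append, pre_play σag σenv, pre_play σag' τ]
    have hw_d : ∀ k, EnvWinsSafeFrom M₃ (M₃.eval (pre (play σag σd) k)) := by
      intro k
      rcases le_or_gt k m₀ with h1 | h1
      · rw [pre_play, hDpre k h1, ← pre_play]
        exact (hnb k).1
      rcases le_or_gt k (m₀ + m') with h2 | h2
      · have hk' : k = m₀ + (k - m₀) := by omega
        rw [pre_play, hk', hDmid (k - m₀) (by omega), Alg6.eval_append,
          ← pre_play σag σenv m₀, ← pre_play σag' τ (k - m₀)]
        exact (hGood (k - m₀) (by omega)).1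
      · have hk' : k = (m₀ + m') + (k - (m₀ + m')) := by omega
        rw [pre_play, hk', hd2, Alg6.eval_append, hqS, ← pre_play σag₂ τs]
        exact Alg6.envWins_residual M₃ _ τs hτspec σag₂ (k - (m₀ + m'))
    have hs_d : ∀ k, 1 ≤ k → M₃.eval (pre (play σag σd) k) ∈ M₃.accept := by
      intro k hk
      rcases le_or_gt k m₀ with h1 | h1
      · rw [pre_play, hDpre k h1, ← pre_play]
        exact (hnb k).2 hk
      rcases le_or_gt k (m₀ + m') with h2 | h2
      · have hk' : k = m₀ + (k - m₀) := by omega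
        rw [pre_play, hk', hDmid (k - m₀) (by omega), Alg6.eval_append,
          ← pre_play σag σenv m₀, ← pre_play σag' τ (k - m₀)]
        exact (hGood (k - m₀) (by omega)).2 (by omega)
      · have hk' : k = (m₀ + m') + (k - (m₀ + m')) := by omega
        rw [pre_play, hk', hd2, Alg6.eval_append, hqS, ← pre_play σag₂ τs (k - (m₀ + m'))]
        exact hτspec σag₂ (k - (m₀ + m')) (by omega)
    obtain ⟨σe₂, hpp₂, hsafe₂'⟩ := Alg6.exists_safe_env M₃ σag σd hw_d hs_d
    have henv₂ : EnvEnforces σe₂ (Safe T₃) := by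
      intro σa' k hk
      rw [hT₃]
      refine ⟨?_, (DFA.mem_accepts _).mpr (hsafe₂' σa' k hk)⟩
      intro hnil
      have := congrArg List.length hnil
      simp [pre] at this
      omega
    have hplay₂ : play σag σe₂ = play σag σd := Alg6.play_ext hpp₂
    have hmem₂ := (hσ σe₂ henv₂).2 (m₀ + m') (by omega)
    rw [hplay₂, pre_play, hDmid m' (le_refl m'), hT₂] at hmem₂
    have hacc := (DFA.mem_accepts _).mp hmem₂.2
    rw [Alg6.eval_append] at hacc
    rw [pre_play σag σenv, pre_play σag' τ]
    exact hacc
  · rintro ⟨σag, hσ⟩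
    set Cnd : List (A × B) → Prop := fun u =>
      1 ≤ u.length ∧ u ∈ T₁ ∧ (∀ j, 1 ≤ j → j ≤ u.length → u.take j ∈ T₂) ∧
        AgentSafeUnder M₂ M₃ (M₂.eval u) (M₃.eval u) with hCnd
    set wit : Q₂ → Q₃ → List B → A := fun p₂ p₃ =>
      if h : AgentSafeUnder M₂ M₃ p₂ p₃ then Classical.choose h
      else fun _ => Classical.arbitrary A with hwit
    have wit_spec : ∀ p₂ p₃, AgentSafeUnder M₂ M₃ p₂ p₃ →
        ∀ (σe : List A → B) (m : ℕ), 1 ≤ m →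
        M₂.evalFrom p₂ (pre (play (wit p₂ p₃) σe) m) ∈ M₂.accept ∨
        ∃ k : ℕ, k ≤ m ∧
          (¬ EnvWinsSafeFrom M₃ (M₃.evalFrom p₃ (pre (play (wit p₂ p₃) σe) k)) ∨
            (1 ≤ k ∧ M₃.evalFrom p₃ (pre (play (wit p₂ p₃) σe) k) ∉ M₃.accept)) := by
      intro p₂ p₃ h σe m hm
      simp only [hwit, dif_pos h]
      exact Classical.choose_spec h σe m hm
    set σst : List B → A := fun l =>
      if h : ∃ m, m ≤ l.length ∧
          Cnd (playPrefix σag (Alg6.fakeEnv (Classical.arbitrary B) l) m) then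
        wit (M₂.eval (playPrefix σag (Alg6.fakeEnv (Classical.arbitrary B) l) (Nat.find h)))
            (M₃.eval (playPrefix σag (Alg6.fakeEnv (Classical.arbitrary B) l) (Nat.find h)))
            (l.drop (Nat.find h))
      else σag l with hσst
    refine ⟨σst, ?_⟩
    intro σenv henv
    have hF₃ : ∀ (σa' : List B → A) (k : ℕ), 1 ≤ k →
        M₃.eval (pre (play σa' σenv) k) ∈ M₃.accept := by
      intro σa' k hk
      have h := henv σa' k hk
      rw [hT₃] at h
      exact (DFA.mem_accepts _).mp h.2
    have hWin : ∀ (σa' : List B → A) (k : ℕ),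
        EnvWinsSafeFrom M₃ (M₃.eval (pre (play σa' σenv) k)) := by
      intro σa' k
      exact Alg6.envWins_residual M₃ M₃.start σenv (fun σa k hk => hF₃ σa k hk) σa' k
    obtain ⟨m₀, hm₀⟩ := hσ σenv
    have hgood : 1 ≤ m₀ ∧ pre (play σag σenv) m₀ ∈ T₁ ∧
        (∀ j, 1 ≤ j → j ≤ m₀ → pre (play σag σenv) j ∈ T₂) ∧
        AgentSafeUnder M₂ M₃ (M₂.eval (pre (play σag σenv) m₀))
          (M₃.eval (pre (play σag σenv) m₀)) := by
      rcases hm₀ with ⟨k, _, hbad⟩ | h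
      · rcases hbad with h1 | h2
        · exact absurd (hWin σag k) h1
        · exact absurd (hF₃ σag k h2.1) h2.2
      · exact h
    have hCm₀ : Cnd (playPrefix σag σenv m₀) := by
      rw [hCnd]
      refine ⟨by simp; omega, ?_, ?_, ?_⟩
      · rw [← pre_play]; exact hgood.2.1
      · intro j hj1 hj2
        rw [Alg6.playPrefix_take σag σenv (by simpa using hj2), ← pre_play]
        exact hgood.2.2.1 j hj1 (by simpa using hj2)
      · rw [← pre_play]; exact hgood.2.2.2
    have hex : ∃ m, Cnd (playPrefix σag σenv m) := ⟨m₀, hCm₀⟩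
    set mS := Nat.find hex with hmS
    have hmSP : Cnd (playPrefix σag σenv mS) := Nat.find_spec hex
    have hmSmin : ∀ m < mS, ¬ Cnd (playPrefix σag σenv m) := fun m hm => Nat.find_min hex hm
    have hmS1 : 1 ≤ mS := by
      have h := hmSP
      rw [hCnd] at h
      simpa using h.1
    have hcanon : ∀ (l : List B) (m : ℕ), m ≤ l.length →
        l.take m = (playPrefix σag σenv m).map Prod.snd →
        playPrefix σag (Alg6.fakeEnv (Classical.arbitrary B) l) m = playPrefix σag σenv m := by
      intro l m hm hlm
      apply Alg6.playPrefix_det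
      rw [Alg6.fakeEnv_spec σag (Classical.arbitrary B) l m hm, hlm]
    have claim1 : playPrefix σst σenv mS = playPrefix σag σenv mS := by
      refine (Alg6.playPrefix_congr mS ?_ (fun _ _ => rfl)).symm
      intro k hk
      have hng : ¬ ∃ m, m ≤ ((playPrefix σag σenv k).map Prod.snd).length ∧
          Cnd (playPrefix σag (Alg6.fakeEnv (Classical.arbitrary B)
            ((playPrefix σag σenv k).map Prod.snd)) m) := by
        rintro ⟨m, hm1, hm2⟩
        have hmk : m ≤ k := by simpa using hm1
        have htake : ((playPrefix σag σenv k).map Prod.snd).take m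
            = (playPrefix σag σenv m).map Prod.snd := by
          rw [← List.map_take, Alg6.playPrefix_take σag σenv hmk]
        rw [hcanon _ m hm1 htake] at hm2
        exact hmSmin m (by omega) hm2
      simp only [hσst]
      rw [dif_neg hng]
    have claim2 : Alg6.shiftAg σst ((playPrefix σag σenv mS).map Prod.snd)
        = wit (M₂.eval (playPrefix σag σenv mS)) (M₃.eval (playPrefix σag σenv mS)) := by
      funext l
      show σst ((playPrefix σag σenv mS).map Prod.snd ++ l) = _
      set L := (playPrefix σag σenv mS).map Prod.snd ++ l with hL
      have hBlen : ((playPrefix σag σenv mS).map Prod.snd).length = mS := by simp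
      have hlen : mS ≤ L.length := by rw [hL]; simp
      have htakem : ∀ m ≤ mS, L.take m = (playPrefix σag σenv m).map Prod.snd := by
        intro m hm
        have h1 : (L.take mS).take m = L.take m := by
          rw [List.take_take, Nat.min_eq_left hm]
        rw [← h1, hL, List.take_left' hBlen, ← List.map_take,
          Alg6.playPrefix_take σag σenv hm]
      have hg : ∃ m, m ≤ L.length ∧
          Cnd (playPrefix σag (Alg6.fakeEnv (Classical.arbitrary B) L) m) := by
        refine ⟨mS, hlen, ?_⟩
        rw [hcanon L mS hlen (htakem mS (le_refl mS))]
        exact hmSP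
      have hfind : Nat.find hg = mS := by
        rw [Nat.find_eq_iff]
        refine ⟨⟨hlen, by rw [hcanon L mS hlen (htakem mS (le_refl mS))]; exact hmSP⟩, ?_⟩
        rintro n hn ⟨hn1, hn2⟩
        rw [hcanon L n hn1 (htakem n (by omega))] at hn2
        exact hmSmin n hn hn2
      simp only [hσst]
      rw [dif_pos hg, hfind, hcanon L mS hlen (htakem mS (le_refl mS)), hL,
        List.drop_left' hBlen]
    have keyρ : ∀ k, playPrefix σst σenv (mS + k)
        = playPrefix σag σenv mS ++
          playPrefix (wit (M₂.eval (playPrefix σag σenv mS)) (M₃.eval (playPrefix σag σenv mS)))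
            (Alg6.shiftEnv σenv ((playPrefix σag σenv mS).map Prod.fst)) k := by
      intro k
      rw [Alg6.playPrefix_add, claim1, claim2]
    have hASS : AgentSafeUnder M₂ M₃ (M₂.eval (playPrefix σag σenv mS))
        (M₃.eval (playPrefix σag σenv mS)) := by
      have h := hmSP
      rw [hCnd] at h
      exact h.2.2.2
    have hwspec := wit_spec _ _ hASS
      (Alg6.shiftEnv σenv ((playPrefix σag σenv mS).map Prod.fst))
    constructor
    · refine ⟨mS, hmS1, ?_⟩
      rw [pre_play, claim1]
      have h := hmSP
      rw [hCnd] at h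
      exact h.2.1
    · intro k hk
      rcases le_or_gt k mS with h1 | h1
      · have hpk : playPrefix σst σenv k = playPrefix σag σenv k := by
          rw [← Alg6.playPrefix_take σst σenv h1, claim1, Alg6.playPrefix_take σag σenv h1]
        rw [pre_play, hpk]
        have hC := hmSP
        rw [hCnd] at hC
        have h2 := hC.2.2.1 k hk (by simp; omega)
        rwa [Alg6.playPrefix_take σag σenv h1] at h2
      · have hk' : k = mS + (k - mS) := by omega
        rw [pre_play, hk', keyρ, hT₂]
        refine ⟨?_, ?_⟩
        · intro hnil
          have := congrArg List.length hnil
          simp at this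
          omega
        · rw [DFA.mem_accepts, Alg6.eval_append]
          rcases hwspec (k - mS) (by omega) with hacc | ⟨k'', hk'', hbad⟩
          · rwa [pre_play] at hacc
          · exfalso
            have hevalEq : M₃.evalFrom (M₃.eval (playPrefix σag σenv mS))
                (pre (play (wit (M₂.eval (playPrefix σag σenv mS))
                    (M₃.eval (playPrefix σag σenv mS)))
                  (Alg6.shiftEnv σenv ((playPrefix σag σenv mS).map Prod.fst))) k'')
                = M₃.eval (pre (play σst σenv) (mS + k'')) := by
              rw [pre_play σst σenv, keyρ k'', Alg6.eval_append, pre_play]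
            rcases hbad with hb1 | hb2
            · rw [hevalEq] at hb1
              exact hb1 (hWin σst (mS + k''))
            · rw [hevalEq] at hb2
              exact hb2.2 (hF₃ σst (mS + k'') (by omega))
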